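/- Let p be an odd prime and a an integer with 1 < a < p such that a does not divide p−1, and suppose the length n of the canonical continued fraction expansion a/p = [0; a_1, …, a_n] is even (so that n ≥ 4). Set i := q_{n−2} − 1 and j := q_{n−1} − q_{n−2}. Then j ≥ 0, i + j ≤ p − 1, and x̂((i+1)·a/p) + x̂((j+1)·a/p) < a/p + x̂((i+j+1)·a/p); equivalently, ⌊(i+1)a/p⌋ + ⌊(j+1)a/p⌋ > ⌊(i+j+1)a/p⌋. -/

import Mathlib

lemma aux_floor_fract (p c q r : ℤ) (hp : 0 < p) (hc : c = q * p + r)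
    (hr0 : 0 ≤ r) (hrp : r < p) :
    ⌊((c : ℤ) : ℝ) / (p : ℝ)⌋ = q ∧
      Int.fract (((c : ℤ) : ℝ) / (p : ℝ)) = (r : ℝ) / (p : ℝ) := by
  have hp' : (0:ℝ) < (p:ℝ) := by exact_mod_cast hp
  have hne : (p:ℝ) ≠ 0 := ne_of_gt hp'
  have heq : ((c:ℤ):ℝ)/(p:ℝ) = (q:ℝ) + (r:ℝ)/(p:ℝ) := by
    field_simp
    push_cast [hc]; ring
  have h01 : (0:ℝ) ≤ (r:ℝ)/(p:ℝ) := div_nonneg (by exact_mod_cast hr0) hp'.le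
  have h1 : (r:ℝ)/(p:ℝ) < 1 := (div_lt_one hp').mpr (by exact_mod_cast hrp)
  constructor
  · rw [heq, Int.floor_intCast_add]
    have : ⌊(r:ℝ)/(p:ℝ)⌋ = 0 := Int.floor_eq_zero_iff.mpr ⟨h01, h1⟩
    omega
  · rw [heq, Int.fract_intCast_add, Int.fract_eq_self.mpr ⟨h01, h1⟩]

set_option maxHeartbeats 1000000 in
/-- Part of the proof of Proposition 6.14 (even case): let `a/p = [0; a_1, …, a_n]`
be the canonical continued fraction expansion with `1 < a < p`, `a ∤ p - 1`
and `n` even (so that `n ≥ 4`). Setting `i = q_{n-2} - 1` and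
`j = q_{n-1} - q_{n-2}`, one has `j ≥ 0`, `i + j ≤ p - 1` and
`{(i+1)a/p} + {(j+1)a/p} < a/p + {(i+j+1)a/p}`, equivalently
`⌊(i+1)a/p⌋ + ⌊(j+1)a/p⌋ > ⌊(i+j+1)a/p⌋`. -/
theorem statement15
    (p a : ℤ) (hp : Prime p) (hodd : Odd p) (ha : 0 < a) (hap : a < p)
    (ha1 : 1 < a) (hnd : ¬ a ∣ p - 1)
    (n : ℕ) (A P Q : ℕ → ℤ)
    -- canonical continued fraction expansion a/p = [0; A 1, …, A n]
    (hA : ∀ k, 1 ≤ k → k ≤ n → 1 ≤ A k) (hAn : 2 ≤ A n)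
    -- denominators of the convergents
    (hQ0 : Q 0 = 1) (hQ1 : Q 1 = A 1)
    (hQrec : ∀ k, k + 2 ≤ n → Q (k + 2) = A (k + 2) * Q (k + 1) + Q k)
    -- numerators of the convergents
    (hP0 : P 0 = 0) (hP1 : P 1 = 1)
    (hPrec : ∀ k, k + 2 ≤ n → P (k + 2) = A (k + 2) * P (k + 1) + P k)
    -- the n-th convergent is a/p in lowest terms
    (hQn : Q n = p) (hPn : P n = a)
    (hneven : Even n)
    (i j : ℤ) (hi : i = Q (n - 2) - 1) (hj : j = Q (n - 1) - Q (n - 2)) :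
    0 ≤ j ∧ i + j ≤ p - 1 ∧
      Int.fract ((((i + 1) * a : ℤ) : ℝ) / (p : ℝ)) +
          Int.fract ((((j + 1) * a : ℤ) : ℝ) / (p : ℝ)) <
        (a : ℝ) / (p : ℝ) + Int.fract ((((i + j + 1) * a : ℤ) : ℝ) / (p : ℝ)) ∧
      ⌊(((i + j + 1) * a : ℤ) : ℝ) / (p : ℝ)⌋ <
        ⌊(((i + 1) * a : ℤ) : ℝ) / (p : ℝ)⌋ + ⌊(((j + 1) * a : ℤ) : ℝ) / (p : ℝ)⌋ := by
  have hp0 : (0:ℤ) < p := lt_trans ha hap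
  -- n ≠ 0
  have hn0 : n ≠ 0 := by
    intro h; subst h; rw [hP0] at hPn; omega
  -- n ≠ 2
  have hn2 : n ≠ 2 := by
    intro h; subst h
    have hq := hQrec 0 (by omega)
    have hpp := hPrec 0 (by omega)
    rw [hQ0, hQ1, hQn] at hq
    rw [hP0, hP1] at hpp
    norm_num at hpp hq
    rw [hPn] at hpp
    exact hnd ⟨A 1, by rw [hpp]; linarith [hq]⟩
  obtain ⟨t, ht⟩ := hneven
  have h4 : 4 ≤ n := by omega
  obtain ⟨m, hm⟩ : ∃ m, n = m + 4 := ⟨n - 4, by omega⟩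
  have hmeven : Even m := ⟨t - 2, by omega⟩
  subst hm
  -- positivity of Q
  have Qpos : ∀ k, k ≤ m + 4 → 1 ≤ Q k := by
    intro k
    induction k using Nat.strong_induction_on with
    | _ k ih =>
      match k with
      | 0 => intro _; omega
      | 1 => intro hk; rw [hQ1]; exact hA 1 (by omega) (by omega)
      | (k+2) =>
        intro hk
        rw [hQrec k (by omega)]
        have h1 := ih (k+1) (by omega) (by omega)
        have h0 := ih k (by omega) (by omega)
        have hA2 := hA (k+2) (by omega) hk
        nlinarith
  -- nonnegativity and positivity of P
  have Pnn : ∀ k, k ≤ m + 4 → 0 ≤ P k := by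
    intro k
    induction k using Nat.strong_induction_on with
    | _ k ih =>
      match k with
      | 0 => intro _; omega
      | 1 => intro _; omega
      | (k+2) =>
        intro hk
        rw [hPrec k (by omega)]
        have h1 := ih (k+1) (by omega) (by omega)
        have h0 := ih k (by omega) (by omega)
        have hA2 := hA (k+2) (by omega) hk
        nlinarith
  have Ppos : ∀ k, 1 ≤ k → k ≤ m + 4 → 1 ≤ P k := by
    intro k
    induction k using Nat.strong_induction_on with
    | _ k ih =>
      match k with
      | 0 => intro h; omega
      | 1 => intro _ _; omega
      | (k+2) =>
        intro _ hk
        rw [hPrec k (by omega)]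
        have h1 := ih (k+1) (by omega) (by omega) (by omega)
        have h0 := Pnn k (by omega)
        have hA2 := hA (k+2) (by omega) hk
        nlinarith
  -- determinant identity
  have Det : ∀ k, k + 1 ≤ m + 4 → P (k+1) * Q k - P k * Q (k+1) = (-1:ℤ)^k := by
    intro k
    induction k with
    | zero => intro _; simp [hP0, hP1, hQ0]
    | succ k ih =>
      intro hk
      have hih := ih (by omega)
      rw [hPrec k (by omega), hQrec k (by omega), pow_succ]
      linear_combination -hih
  -- rewrite indices in hi, hj
  rw [show m+4-2 = m+2 from rfl] at hi
  rw [show m+4-1 = m+3 from rfl, show m+4-2 = m+2 from rfl] at hj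
  -- abbreviations
  set b := A (m+4) with hb
  set q1 := Q (m+3) with hq1
  set q2 := Q (m+2) with hq2
  set p1 := P (m+3) with hp1
  set p2 := P (m+2) with hp2
  have hrecQ : p = b * q1 + q2 := by
    have := hQrec (m+2) (by omega); rw [hQn] at this; exact this
  have hrecP : a = b * p1 + p2 := by
    have := hPrec (m+2) (by omega); rw [hPn] at this; exact this
  have hm1 : (-1:ℤ)^m = 1 := hmeven.neg_one_pow
  have D3 : a * q1 - p1 * p = -1 := by
    have := Det (m+3) (by omega)
    rw [show m+3+1 = m+4 from rfl, hPn, hQn] at this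
    rw [show m+3 = m+1+2 from rfl, pow_add, pow_add] at this
    rw [hm1] at this
    norm_num at this
    linarith
  have D2 : p1 * q2 - p2 * q1 = 1 := by
    have := Det (m+2) (by omega)
    rw [show m+2+1 = m+3 from rfl] at this
    rw [show m+2 = m+1+1 from rfl, pow_add, pow_add] at this
    rw [hm1] at this
    norm_num at this
    linarith
  -- bounds
  have hq2p : 1 ≤ q2 := Qpos (m+2) (by omega)
  have hq1p : 1 ≤ q1 := Qpos (m+3) (by omega)
  have hp2p : 1 ≤ p2 := Ppos (m+2) (by omega) (by omega)
  have hp1p : 1 ≤ p1 := Ppos (m+3) (by omega) (by omega)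
  have hb2 : 2 ≤ b := hAn
  have hQrec3 : q1 = A (m+3) * q2 + Q (m+1) := hQrec (m+1) (by omega)
  have hA3 : 1 ≤ A (m+3) := hA (m+3) (by omega) (by omega)
  have hQm1 : 1 ≤ Q (m+1) := Qpos (m+1) (by omega)
  have hq12 : q2 < q1 := by
    have h1 : q2 * 1 ≤ q2 * A (m+3) := by
      apply mul_le_mul_of_nonneg_left (by linarith) (by linarith)
    linarith
  have hba : b < a := by
    have h1 : b * 1 ≤ b * p1 := by
      apply mul_le_mul_of_nonneg_left (by linarith) (by linarith)
    linarith
  have hq1lt : q1 < p := by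
    have h1 : q1 * 1 ≤ q1 * b := by
      apply mul_le_mul_of_nonneg_left (by linarith) (by linarith)
    linarith
  -- the three division decompositions
  have hI : (i + 1) * a = p2 * p + b := by
    rw [hi]; linear_combination q2 * hrecP - p2 * hrecQ + b * D2
  have hJ : (j + 1) * a = (p1 - p2) * p + (a - b - 1) := by
    rw [hj]; linear_combination D3 - (q2 * hrecP - p2 * hrecQ + b * D2)
  have hK : (i + j + 1) * a = (p1 - 1) * p + (p - 1) := by
    rw [hi, hj]; linear_combination D3
  have K1 := aux_floor_fract p ((i+1)*a) p2 b hp0 hI (by linarith) (by linarith)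
  have K2 := aux_floor_fract p ((j+1)*a) (p1 - p2) (a - b - 1) hp0 hJ
    (by linarith) (by linarith)
  have K3 := aux_floor_fract p ((i+j+1)*a) (p1 - 1) (p - 1) hp0 hK
    (by linarith) (by linarith)
  have hp' : (0:ℝ) < (p:ℝ) := by exact_mod_cast hp0
  refine ⟨by omega, by omega, ?_, ?_⟩
  · rw [K1.2, K2.2, K3.2]
    rw [← add_div, ← add_div]
    rw [div_lt_div_iff_of_pos_right hp']
    push_cast
    linarith
  · rw [K1.1, K2.1, K3.1]
    omega
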